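/- Let d ≥ 2, ε > 0, and consider the points x = 0 ∈ ℝ^{d-1} and x' = (ε/√(d−1), …, ε/√(d−1)) ∈ ℝ^{d-1}. Then ‖x − x'‖₂ = ε and ‖σ(x) − σ(x')‖₂ = 2ε/√(1 + ε²). In particular, the Lipschitz constant 2 in the bound ‖σ(x) − σ(x')‖₂ ≤ 2‖x − x'‖₂ cannot be improved. -/

import Mathlib

open Finset

/-- The inverse stereographic projection `σ : ℝ^(d-1) → ℝ^d` with pole `(0,…,0,1)`:
`σ(x) = (2x₁/(1+S²), …, 2x_{d-1}/(1+S²), (−1+S²)/(1+S²))` where `S² = ∑ⱼ xⱼ²`. -/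
noncomputable def sigma' {d : ℕ} (x : Fin (d - 1) → ℝ) : Fin d → ℝ := fun k =>
  if h : (k : ℕ) < d - 1 then
    2 * x ⟨k, h⟩ / (1 + ∑ j, x j ^ 2)
  else
    (-1 + ∑ j, x j ^ 2) / (1 + ∑ j, x j ^ 2)

/-- The stereographic projection `τ : ℝ^d → ℝ^(d-1)` from the pole `(0,…,0,1)`:
`τ(x) = (x₁/(1−x_d), …, x_{d-1}/(1−x_d))`. -/
noncomputable def tau' {d : ℕ} (x : Fin d → ℝ) : Fin (d - 1) → ℝ := fun i =>
  x ⟨(i : ℕ), by have := i.isLt; omega⟩ / (1 - x ⟨d - 1, by have := i.isLt; omega⟩)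

/-- The projection pole `p = (0,…,0,1) ∈ ℝ^d`. -/
def pole (d : ℕ) : Fin d → ℝ := fun k => if (k : ℕ) = d - 1 then 1 else 0

/-- The Euclidean norm `‖x‖₂` of a vector `x ∈ ℝ^n`. -/
noncomputable def norm2 {n : ℕ} (x : Fin n → ℝ) : ℝ := Real.sqrt (∑ i, x i ^ 2)
lemma key {d : ℕ} (hd : 2 ≤ d) (ε : ℝ) (hε : 0 < ε) :
    norm2 ((0 : Fin (d - 1) → ℝ) - fun _ => ε / Real.sqrt ((d : ℝ) - 1)) = ε ∧
    norm2 (sigma' (0 : Fin (d - 1) → ℝ) -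
        sigma' (fun _ => ε / Real.sqrt ((d : ℝ) - 1))) =
      2 * ε / Real.sqrt (1 + ε ^ 2) := by
  obtain ⟨m, rfl⟩ : ∃ m, d = m + 2 := ⟨d - 2, by omega⟩
  have h21 : m + 2 - 1 = m + 1 := rfl
  set a : ℝ := ε / Real.sqrt (((m + 2 : ℕ) : ℝ) - 1) with ha
  have hsq : Real.sqrt (((m + 2 : ℕ) : ℝ) - 1) ^ 2 = (m : ℝ) + 1 := by
    rw [Real.sq_sqrt (by push_cast; linarith [Nat.cast_nonneg (α := ℝ) m])]
    push_cast; ring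
  have hm1 : ((m : ℝ) + 1) ≠ 0 := by positivity
  have ha2 : a ^ 2 = ε ^ 2 / ((m : ℝ) + 1) := by
    rw [ha, div_pow, hsq]
  have hε2 : (0:ℝ) < 1 + ε ^ 2 := by positivity
  have hS0 : ∑ j, ((0 : Fin (m + 2 - 1) → ℝ)) j ^ 2 = 0 := by simp
  have hSf : ∑ j : Fin (m + 2 - 1), (fun _ : Fin (m+2-1) => a) j ^ 2 = ε ^ 2 := by
    rw [Finset.sum_const, Finset.card_univ, Fintype.card_fin, h21, nsmul_eq_mul, ha2]
    push_cast
    field_simp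
  constructor
  · rw [norm2]
    have h1 : (∑ i : Fin (m+2-1), ((((0 : Fin (m+2-1) → ℝ) - fun _ => a) : Fin (m+2-1) → ℝ) i) ^ 2) = ε ^ 2 := by
      simp only [Pi.sub_apply, Pi.zero_apply, zero_sub, neg_sq]
      exact hSf
    rw [h1, Real.sqrt_sq hε.le]
  · rw [norm2]
    have h2 : (∑ k : Fin (m+2), (((sigma' (0 : Fin (m+2-1) → ℝ) - sigma' fun _ => a : Fin (m+2) → ℝ)) k) ^ 2)
        = 4 * ε ^ 2 / (1 + ε ^ 2) := by
      rw [show m + 2 = (m + 1) + 1 from rfl, Fin.sum_univ_castSucc]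
      have hlast : (((sigma' (0 : Fin (m+2-1) → ℝ) - sigma' fun _ => a : Fin (m+2) → ℝ)) (Fin.last (m+1))) ^ 2
          = 4 * ε ^ 4 / (1 + ε ^ 2) ^ 2 := by
        simp only [Pi.sub_apply, sigma', Fin.val_last, h21, lt_irrefl, dif_neg,
          not_lt, le_refl, hS0, hSf, dite_eq_ite, if_neg (lt_irrefl (m+1)), dite_false, if_false, Pi.zero_apply, ne_eq, OfNat.ofNat_ne_zero, not_false_eq_true, zero_pow, Finset.sum_const_zero]
        field_simp
        ring
      have hcast : ∀ i : Fin (m + 1),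
          (((sigma' (0 : Fin (m+2-1) → ℝ) - sigma' fun _ => a : Fin (m+2) → ℝ)) (Fin.castSucc i)) ^ 2
          = 4 * a ^ 2 / (1 + ε ^ 2) ^ 2 := by
        intro i
        have hi : ((Fin.castSucc i : Fin (m+2)) : ℕ) < m + 2 - 1 := by
          simpa [h21] using i.isLt
        simp only [Pi.sub_apply, sigma', dif_pos hi, hS0, hSf, Pi.zero_apply]
        field_simp
        ring
      rw [Finset.sum_congr rfl fun i _ => hcast i, hlast, Finset.sum_const, Finset.card_univ,
        Fintype.card_fin, nsmul_eq_mul, ha2]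
      field_simp
      push_cast
      ring
    rw [h2, show 4 * ε ^ 2 / (1 + ε ^ 2) = (2 * ε / Real.sqrt (1 + ε ^ 2)) ^ 2 by
      rw [div_pow, Real.sq_sqrt hε2.le]; ring,
      Real.sqrt_sq (by positivity)]

/-- For `x = 0` and `x' = (ε/√(d−1), …, ε/√(d−1))` we have `‖x − x'‖₂ = ε` and
`‖σ(x) − σ(x')‖₂ = 2ε/√(1 + ε²)`; in particular the Lipschitz constant `2` of `σ`
on the unit ball cannot be improved. -/
theorem sigma_lipschitz_tight {d : ℕ} (hd : 2 ≤ d) (ε : ℝ) (hε : 0 < ε) :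
    norm2 ((0 : Fin (d - 1) → ℝ) - fun _ => ε / Real.sqrt ((d : ℝ) - 1)) = ε ∧
    norm2 (sigma' (0 : Fin (d - 1) → ℝ) -
        sigma' (fun _ => ε / Real.sqrt ((d : ℝ) - 1))) =
      2 * ε / Real.sqrt (1 + ε ^ 2) ∧
    (∀ c : ℝ, (∀ x x' : Fin (d - 1) → ℝ, norm2 x ≤ 1 → norm2 x' ≤ 1 →
        norm2 (sigma' x - sigma' x') ≤ c * norm2 (x - x')) → 2 ≤ c) := by
  obtain ⟨k1, k2⟩ := key hd ε hε
  refine ⟨k1, k2, ?_⟩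
  intro c hc
  have main : ∀ t : ℝ, 0 < t → t ≤ 1 → 2 / Real.sqrt (1 + t ^ 2) ≤ c := by
    intro t ht ht1
    obtain ⟨p1, p2⟩ := key hd t ht
    have hx' : norm2 (fun _ : Fin (d - 1) => t / Real.sqrt ((d : ℝ) - 1)) ≤ 1 := by
      have he : norm2 (fun _ : Fin (d - 1) => t / Real.sqrt ((d : ℝ) - 1)) = t := by
        rw [norm2] at p1 ⊢
        simpa using p1
      linarith
    have h0 : norm2 (0 : Fin (d - 1) → ℝ) ≤ 1 := by rw [norm2]; simp
    have hb := hc 0 (fun _ => t / Real.sqrt ((d : ℝ) - 1)) h0 hx'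
    rw [p1, p2] at hb
    have hs : 0 < Real.sqrt (1 + t ^ 2) := Real.sqrt_pos.2 (by positivity)
    rw [div_le_iff₀ hs] at hb ⊢
    nlinarith [hb, ht, hs]
  have hc1 := main 1 one_pos le_rfl
  have h12 : (1 : ℝ) + 1 ^ 2 = 2 := by norm_num
  rw [h12, Real.div_sqrt] at hc1
  have hcpos : 0 < c := lt_of_lt_of_le (Real.sqrt_pos.2 (by norm_num)) hc1
  have hc2' : 2 ≤ c ^ 2 := by
    nlinarith [Real.sq_sqrt (show (0:ℝ) ≤ 2 by norm_num), Real.sqrt_nonneg 2]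
  by_contra hlt
  push_neg at hlt
  set t := Real.sqrt (4 / c ^ 2 - 1) / 2 with htdef
  have h4c : 0 < 4 / c ^ 2 - 1 := by
    have hc4 : c ^ 2 < 4 := by nlinarith
    rw [sub_pos, lt_div_iff₀ (by positivity)]
    linarith
  have ht : 0 < t := by positivity
  have ht2 : t ^ 2 = (4 / c ^ 2 - 1) / 4 := by
    rw [htdef, div_pow, Real.sq_sqrt h4c.le]
    norm_num
  have ht1 : t ≤ 1 := by
    have h42 : 4 / c ^ 2 ≤ 2 := by
      rw [div_le_iff₀ (by positivity)]
      nlinarith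
    nlinarith
  have hmt := main t ht ht1
  have hs : 0 < Real.sqrt (1 + t ^ 2) := Real.sqrt_pos.2 (by positivity)
  rw [div_le_iff₀ hs] at hmt
  have hct : c ^ 2 * t ^ 2 = (4 - c ^ 2) / 4 := by
    rw [ht2]
    field_simp
  nlinarith [hmt, hct, Real.sq_sqrt (show (0:ℝ) ≤ 1 + t ^ 2 by positivity), hcpos, hlt,
    sq_nonneg (c * Real.sqrt (1 + t ^ 2) - 2)]
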